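/- For all integers s ≥ 1 and t ≥ 1, setting r = s + 4, the domination number of the tree T_{s,t}^r equals r − 1, i.e., γ(T_{s,t}^r) = s + 3. -/

import Mathlib

/-- A dominating set: every vertex is in `D` or adjacent to a vertex of `D`. -/
def IsDominatingSet {V : Type*} (G : SimpleGraph V) (D : Finset V) : Prop :=
  ∀ v : V, v ∈ D ∨ ∃ u ∈ D, G.Adj u v

/-- The domination number `γ(G)`: minimum cardinality of a dominating set. -/
noncomputable def dominationNumber {V : Type*} [Fintype V] (G : SimpleGraph V) : ℕ :=
  sInf {n | ∃ D : Finset V, IsDominatingSet G D ∧ D.card = n}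

/-- The tree `T_{s,t}^r` (with `r = s + 4`): a path `v₀v₁v₂v₃v₄` (the `Sum.inl`
vertices), pendant paths `v₂ pᵢ qᵢ` for `i = 1,…,s` and pendant vertices
`w₁,…,w_t` attached to `v₂`. -/
def Tst (s t : ℕ) : SimpleGraph (Fin 5 ⊕ Fin s ⊕ Fin s ⊕ Fin t) :=
  SimpleGraph.fromRel (fun a b =>
    match a, b with
    | Sum.inl i, Sum.inl j => (i : ℕ) + 1 = (j : ℕ)                 -- path edges vᵢ v_{i+1}
    | Sum.inr (Sum.inl i), Sum.inr (Sum.inr (Sum.inl j)) => (i : ℕ) = (j : ℕ)  -- pᵢ qᵢ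
    | Sum.inl i, Sum.inr (Sum.inl _) => (i : ℕ) = 2                 -- v₂ pᵢ
    | Sum.inl i, Sum.inr (Sum.inr (Sum.inr _)) => (i : ℕ) = 2       -- v₂ wⱼ
    | _, _ => False)

/-- Classification of the vertices of `Tst s t` into `s + 3` classes:
class `i < s` is `{pᵢ, qᵢ}`, class `s` is `{v₀, v₁}`, class `s + 1` is
`{v₃, v₄}`, class `s + 2` is `{v₂, w₁, …, w_t}`. -/
def TstCl (s t : ℕ) : (Fin 5 ⊕ Fin s ⊕ Fin s ⊕ Fin t) → ℕ
  | Sum.inl i => if (i : ℕ) ≤ 1 then s else if (i : ℕ) = 2 then s + 2 else s + 1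
  | Sum.inr (Sum.inl i) => i
  | Sum.inr (Sum.inr (Sum.inl i)) => i
  | Sum.inr (Sum.inr (Sum.inr _)) => s + 2

/-- The explicit dominating set `{v₁, v₂, v₄, p₁, …, p_s}` of size `s + 3`. -/
def TstD (s t : ℕ) : Finset (Fin 5 ⊕ Fin s ⊕ Fin s ⊕ Fin t) :=
  ({Sum.inl 1, Sum.inl 2, Sum.inl 4} : Finset _) ∪
    Finset.univ.image (fun i : Fin s => Sum.inr (Sum.inl i))

lemma TstD_card (s t : ℕ) : (TstD s t).card = s + 3 := by
  rw [TstD, Finset.card_union_of_disjoint (by simp),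
    Finset.card_image_of_injective _ (fun a b h => by simpa using h)]
  simp [Finset.card_univ]
  omega

lemma TstD_dom (s t : ℕ) : IsDominatingSet (Tst s t) (TstD s t) := by
  intro v
  rcases v with a | b | c | d
  · fin_cases a
    · right
      refine ⟨Sum.inl 1, by simp [TstD], ?_⟩
      simp only [Tst, SimpleGraph.fromRel_adj]
      exact ⟨by simp, Or.inr (by decide)⟩
    · left; simp [TstD]
    · left; simp [TstD]
    · right
      refine ⟨Sum.inl 2, by simp [TstD], ?_⟩
      simp only [Tst, SimpleGraph.fromRel_adj]
      exact ⟨by simp, Or.inl (by decide)⟩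
    · left; simp [TstD]
  · left; simp [TstD]
  · right
    exact ⟨Sum.inr (Sum.inl c), by simp [TstD], by simp [Tst, SimpleGraph.fromRel_adj]⟩
  · right
    exact ⟨Sum.inl 2, by simp [TstD], by simp [Tst, SimpleGraph.fromRel_adj]⟩

/-- For all integers `s, t ≥ 1`, with `r = s + 4`, the domination number of the
tree `T_{s,t}^r` equals `r - 1 = s + 3`. -/
theorem dominationNumber_Tst (s t : ℕ) (hs : 1 ≤ s) (ht : 1 ≤ t) :
    dominationNumber (Tst s t) = s + 3 := by
  classical
  have hmem : s + 3 ∈ {n | ∃ D : Finset (Fin 5 ⊕ Fin s ⊕ Fin s ⊕ Fin t),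
      IsDominatingSet (Tst s t) D ∧ D.card = n} :=
    ⟨TstD s t, TstD_dom s t, TstD_card s t⟩
  refine le_antisymm (Nat.sInf_le hmem) (le_csInf ⟨_, hmem⟩ ?_)
  rintro n ⟨E, hE, rfl⟩
  -- every class `k < s + 3` contains a vertex of `E`
  have key : ∀ k ∈ Finset.range (s + 3), k ∈ E.image (TstCl s t) := by
    intro k hk
    simp only [Finset.mem_range] at hk
    simp only [Finset.mem_image]
    rcases lt_or_ge k s with hks | hks
    · -- class of `p_k, q_k`: look at a dominator of `q_k`
      rcases hE (Sum.inr (Sum.inr (Sum.inl ⟨k, hks⟩))) with h | ⟨u, hu, hadj⟩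
      · exact ⟨_, h, rfl⟩
      · have : u = Sum.inr (Sum.inl ⟨k, hks⟩) := by
          rcases u with a | b | c | d <;> simp [Tst, SimpleGraph.fromRel_adj] at hadj <;>
            simp [Fin.ext_iff, hadj]
        exact ⟨u, hu, by simp [this, TstCl]⟩
    · rcases Nat.lt_or_ge k (s + 1) with hk1 | hk1
      · -- class `s`: look at a dominator of `v₀`
        have hks' : k = s := by omega
        rcases hE (Sum.inl 0) with h | ⟨u, hu, hadj⟩
        · exact ⟨_, h, by simp [TstCl, hks']⟩
        · have : u = Sum.inl 1 := by
            rcases u with a | b | c | d <;> simp [Tst, SimpleGraph.fromRel_adj] at hadj <;>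
              simp [Fin.ext_iff] <;> omega
          exact ⟨u, hu, by simp [this, TstCl, hks']⟩
      · rcases Nat.lt_or_ge k (s + 2) with hk2 | hk2
        · -- class `s + 1`: look at a dominator of `v₄`
          have hks' : k = s + 1 := by omega
          rcases hE (Sum.inl 4) with h | ⟨u, hu, hadj⟩
          · exact ⟨_, h, by simp [TstCl, hks', show ((4 : Fin 5) : ℕ) = 4 from rfl]⟩
          · have : u = Sum.inl 3 := by
              rcases u with a | b | c | d <;> simp [Tst, SimpleGraph.fromRel_adj] at hadj <;>
                simp_all [Fin.ext_iff] <;> omega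
            exact ⟨u, hu, by simp [this, TstCl, hks', show ((3 : Fin 5) : ℕ) = 3 from rfl]⟩
        · -- class `s + 2`: look at a dominator of `w₁`
          have hks' : k = s + 2 := by omega
          rcases hE (Sum.inr (Sum.inr (Sum.inr ⟨0, ht⟩))) with h | ⟨u, hu, hadj⟩
          · exact ⟨_, h, by simp [TstCl, hks']⟩
          · have : u = Sum.inl 2 := by
              rcases u with a | b | c | d <;> simp [Tst, SimpleGraph.fromRel_adj] at hadj <;>
                simp_all [Fin.ext_iff] <;> omega
            exact ⟨u, hu, by simp [this, TstCl, hks']⟩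
  calc s + 3 = (Finset.range (s + 3)).card := by simp
    _ ≤ (E.image (TstCl s t)).card := Finset.card_le_card key
    _ ≤ E.card := Finset.card_image_le
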